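/- Let 1 ≤ p < ∞. For every f ∈ L^p(𝕋), ‖S_n^a(f)‖_p ≤ ((1+|a|)/(1-|a|))^{2/p} Λ_n ‖f‖_p, where Λ_n is the Lebesgue constant. -/

import Mathlib

open Real MeasureTheory

/-- The Dirichlet kernel `D_n(u) = sin((n+1/2)u)/sin(u/2)`. -/
noncomputable def dirichlet (n : ℕ) (u : ℝ) : ℝ :=
  Real.sin (((n : ℝ) + 1 / 2) * u) / Real.sin (u / 2)

/-- The Lebesgue constant `Λ_n`. -/
noncomputable def lebesgueConst (n : ℕ) : ℝ :=
  (1 / (2 * π)) * ∫ t in (-π)..π, |dirichlet n t|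

/-- The nonlinear Fourier partial sum written through the Dirichlet kernel,
where `F = f ∘ θ⁻¹`. -/
noncomputable def kernelPartialSum (θ : ℝ → ℝ) (F : ℝ → ℂ) (n : ℕ) (x : ℝ) : ℂ :=
  (1 / (2 * π) : ℂ) * ∫ t in (-π)..π, F (θ x + t) * (dirichlet n t : ℂ)

/-- The normalized `L^p` norm on one period. -/
noncomputable def pNorm (p : ℝ) (g : ℝ → ℂ) : ℝ :=
  ((1 / (2 * π)) * ∫ t in (-π)..π, ‖g t‖ ^ p) ^ (1 / p)

namespace PartialSumAux

open scoped ENNReal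

lemma abs_sin_nat_mul_le (m : ℕ) (x : ℝ) : |Real.sin (m * x)| ≤ m * |Real.sin x| := by
  induction m with
  | zero => simp
  | succ k ih =>
    have h : ((k : ℝ) + 1) * x = k * x + x := by ring
    rw [Nat.cast_succ, h, Real.sin_add]
    calc |Real.sin (k*x) * Real.cos x + Real.cos (k*x) * Real.sin x|
        ≤ |Real.sin (k*x) * Real.cos x| + |Real.cos (k*x) * Real.sin x| := abs_add_le _ _
      _ ≤ |Real.sin (k*x)| * 1 + 1 * |Real.sin x| := by
          rw [abs_mul, abs_mul]
          gcongr
          · exact Real.abs_cos_le_one x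
          · exact Real.abs_cos_le_one _
      _ ≤ (k : ℝ) * |Real.sin x| * 1 + 1 * |Real.sin x| := by gcongr
      _ = ((k : ℝ) + 1) * |Real.sin x| := by ring

lemma abs_dirichlet_le (n : ℕ) (u : ℝ) : |dirichlet n u| ≤ 2 * n + 1 := by
  unfold dirichlet
  rcases eq_or_ne (Real.sin (u / 2)) 0 with h | h
  · rw [h]
    simp
    positivity
  · rw [abs_div, div_le_iff₀ (abs_pos.2 h)]
    have h2 : ((n : ℝ) + 1 / 2) * u = ((2 * n + 1 : ℕ) : ℝ) * (u / 2) := by push_cast; ring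
    calc |Real.sin (((n : ℝ) + 1 / 2) * u)|
        = |Real.sin (((2 * n + 1 : ℕ) : ℝ) * (u / 2))| := by rw [h2]
      _ ≤ ((2 * n + 1 : ℕ) : ℝ) * |Real.sin (u / 2)| := abs_sin_nat_mul_le _ _
      _ = (2 * n + 1) * |Real.sin (u / 2)| := by push_cast; ring

lemma lintegral_image_eq_lintegral_abs_deriv_mul {s : Set ℝ} {f f' : ℝ → ℝ}
    (hs : MeasurableSet s) (hf' : ∀ x ∈ s, HasDerivWithinAt f (f' x) s x)
    (hf : Set.InjOn f s) (g : ℝ → ℝ≥0∞) :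
    ∫⁻ x in f '' s, g x = ∫⁻ x in s, ENNReal.ofReal |f' x| * g (f x) := by
  simpa only [ContinuousLinearMap.det_toSpanSingleton] using
    MeasureTheory.lintegral_image_eq_lintegral_abs_det_fderiv_mul volume hs
      (fun x hx => (hf' x hx).hasFDerivWithinAt) hf g

lemma jensen_aux {α : Type*} [MeasurableSpace α] (μ : Measure α) {p : ℝ} (hp : 1 ≤ p)
    {G D : α → ℝ≥0∞} (hG : Measurable G) (hD : Measurable D) :
    (∫⁻ a, G a * D a ∂μ) ^ p ≤ (∫⁻ a, D a ∂μ) ^ (p - 1) * ∫⁻ a, G a ^ p * D a ∂μ := by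
  rcases eq_or_lt_of_le hp with h1 | h1
  · simp [← h1]
  · have hp0 : (0:ℝ) < p := by linarith
    set q := p / (p - 1) with hqdef
    have hpq : p.HolderConjugate q := Real.HolderConjugate.conjExponent h1
    have hqpos : (0:ℝ) < q := hpq.symm.pos
    have hsum : 1 / p + 1 / q = 1 := by
      rw [one_div, one_div]; exact hpq.inv_add_inv_eq_one
    have key := ENNReal.lintegral_mul_le_Lp_mul_Lq μ hpq
      ((hG.mul (hD.pow measurable_const)).aemeasurable)
      ((hD.pow measurable_const).aemeasurable)
      (f := fun a => G a * D a ^ (1 / p)) (g := fun a => D a ^ (1 / q))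
    have hFH : ∀ a, (G a * D a ^ (1 / p)) * D a ^ (1 / q) = G a * D a := fun a => by
      rw [mul_assoc, ← ENNReal.rpow_add_of_nonneg _ _ (by positivity) (by positivity), hsum,
        ENNReal.rpow_one]
    have hFp : ∀ a, (G a * D a ^ (1 / p)) ^ p = G a ^ p * D a := fun a => by
      rw [ENNReal.mul_rpow_of_nonneg _ _ hp0.le, ← ENNReal.rpow_mul,
        one_div_mul_cancel hp0.ne', ENNReal.rpow_one]
    have hHq : ∀ a, (D a ^ (1 / q)) ^ q = D a := fun a => by
      rw [← ENNReal.rpow_mul, one_div_mul_cancel hqpos.ne', ENNReal.rpow_one]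
    simp only [Pi.mul_apply] at key
    simp only [hFH, hFp, hHq] at key
    calc (∫⁻ a, G a * D a ∂μ) ^ p
        ≤ ((∫⁻ a, G a ^ p * D a ∂μ) ^ (1/p) * (∫⁻ a, D a ∂μ) ^ (1/q)) ^ p :=
          ENNReal.rpow_le_rpow key hp0.le
      _ = (∫⁻ a, G a ^ p * D a ∂μ) * (∫⁻ a, D a ∂μ) ^ (p - 1) := by
          have hqp : 1 / q * p = p - 1 := by
            rw [hqdef]; field_simp
          rw [ENNReal.mul_rpow_of_nonneg _ _ hp0.le, ← ENNReal.rpow_mul, ← ENNReal.rpow_mul,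
            one_div_mul_cancel hp0.ne', ENNReal.rpow_one, hqp]
      _ = (∫⁻ a, D a ∂μ) ^ (p - 1) * ∫⁻ a, G a ^ p * D a ∂μ := mul_comm _ _

lemma integrableOn_of_periodic {g : ℝ → ℝ} (hgper : Function.Periodic g (2 * π))
    (hgi : IntervalIntegrable g volume (-π) π) (b : ℝ) :
    IntegrableOn g (Set.Ioc b (b + 2 * π)) volume := by
  have hπ : (0:ℝ) < π := pi_pos
  have trans : ∀ m : ℤ, IntegrableOn g (Set.Ioc (-π + 2*π*m) (π + 2*π*m)) volume := by
    intro m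
    have h1 : IntervalIntegrable (fun x => g (x - 2*π*m)) volume (-π + 2*π*m) (π + 2*π*m) :=
      hgi.comp_sub_right (2*π*m)
    have h2 : (fun x => g (x - 2*π*m)) = g := funext fun x => by
      have := (hgper.int_mul m).sub_eq x
      rw [show (2*π*(m:ℝ)) = (m:ℝ) * (2*π) by ring]
      exact this
    rw [h2] at h1
    exact (intervalIntegrable_iff_integrableOn_Ioc_of_le (by linarith)).1 h1
  set m : ℤ := ⌊(b + π) / (2*π)⌋ with hm
  have h2π : (0:ℝ) < 2*π := by linarith
  have hm1 : -π + 2*π*m ≤ b := by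
    have h := (le_div_iff₀ h2π).1 (Int.floor_le ((b + π) / (2*π)))
    rw [← hm] at h
    linarith
  have hm2 : b + 2*π ≤ π + 2*π*((m:ℝ) + 1) := by
    have h := (div_lt_iff₀ h2π).1 (Int.lt_floor_add_one ((b + π) / (2*π)))
    rw [← hm] at h
    linarith
  have hsub : Set.Ioc b (b + 2*π) ⊆
      Set.Ioc (-π + 2*π*m) (π + 2*π*m) ∪ Set.Ioc (-π + 2*π*((m:ℤ)+1)) (π + 2*π*((m:ℤ)+1)) := by
    intro x hx
    rcases le_or_gt x (π + 2*π*m) with h | h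
    · exact Or.inl ⟨lt_of_le_of_lt hm1 hx.1, h⟩
    · refine Or.inr ⟨?_, ?_⟩
      · push_cast; linarith
      · push_cast; linarith [hx.2]
  refine ((trans m).union (trans (m+1))).mono_set ?_
  push_cast
  exact hsub

lemma lintegral_periodic_Ioc {g : ℝ → ℝ} (hgper : Function.Periodic g (2 * π))
    (hgi : IntervalIntegrable g volume (-π) π) (hgnn : ∀ x, 0 ≤ g x) (b : ℝ) :
    ∫⁻ u in Set.Ioc b (b + 2 * π), ENNReal.ofReal (g u) =
      ENNReal.ofReal (∫ u in (-π)..π, g u) := by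
  have hπ : (0:ℝ) < π := pi_pos
  have hio := integrableOn_of_periodic hgper hgi b
  rw [← MeasureTheory.ofReal_integral_eq_lintegral_ofReal hio (ae_of_all _ hgnn)]
  congr 1
  rw [← intervalIntegral.integral_of_le (by linarith : b ≤ b + 2*π),
    hgper.intervalIntegral_add_eq b (-π), show -π + 2*π = π by ring]

end PartialSumAux

set_option maxHeartbeats 2000000 in
theorem partial_sum_Lp_norm_bound
    (a : ℂ) (ha : ‖a‖ < 1)
    (θ : ℝ → ℝ) (hθc : Continuous θ) (hθm : StrictMono θ)
    (hper : ∀ t : ℝ, θ (t + 2 * π) = θ t + 2 * π)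
    (hθd : Differentiable ℝ θ)
    (hbounds : ∀ t : ℝ, (1 - ‖a‖) / (1 + ‖a‖) ≤ deriv θ t ∧
      deriv θ t ≤ (1 + ‖a‖) / (1 - ‖a‖))
    (θinv : ℝ → ℝ) (hinv₁ : ∀ t, θinv (θ t) = t) (hinv₂ : ∀ t, θ (θinv t) = t)
    (p : ℝ) (hp : 1 ≤ p)
    (f : ℝ → ℂ) (hfm : Measurable f) (hfper : Function.Periodic f (2 * π))
    (hfi : IntervalIntegrable f MeasureTheory.volume (-π) π)
    (hfp : IntervalIntegrable (fun t => ‖f t‖ ^ p) MeasureTheory.volume (-π) π)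
    (n : ℕ) :
    pNorm p (kernelPartialSum θ (f ∘ θinv) n) ≤
      ((1 + ‖a‖) / (1 - ‖a‖)) ^ (2 / p) * lebesgueConst n * pNorm p f := by
  have hπ : (0:ℝ) < π := pi_pos
  have hle : (-π) ≤ π := by linarith
  have hp0 : (0:ℝ) < p := by linarith
  set C : ℝ := (1 + ‖a‖) / (1 - ‖a‖) with hCdef
  have ha0 : (0:ℝ) ≤ ‖a‖ := norm_nonneg a
  have h1a : (0:ℝ) < 1 - ‖a‖ := by linarith
  have h1a' : (0:ℝ) < 1 + ‖a‖ := by linarith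
  have hCpos : 0 < C := div_pos h1a' h1a
  have hCinv : C⁻¹ = (1 - ‖a‖) / (1 + ‖a‖) := by rw [hCdef, inv_div]
  have hdpos : ∀ x, 0 < deriv θ x := fun x =>
    lt_of_lt_of_le (div_pos h1a h1a') (hbounds x).1
  have hdlow : ∀ x, C⁻¹ ≤ deriv θ x := fun x => by rw [hCinv]; exact (hbounds x).1
  have hdhigh : ∀ x, deriv θ x ≤ C := fun x => (hbounds x).2
  -- θinv facts
  have hinvmono : StrictMono θinv := by
    intro s u h
    by_contra hc
    push_neg at hc
    have := hθm.monotone hc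
    rw [hinv₂, hinv₂] at this
    exact absurd h (not_lt.2 this)
  have hinvsurj : Function.Surjective θinv := fun t => ⟨θ t, hinv₁ t⟩
  have hinvc : Continuous θinv := by
    have : ⇑(StrictMono.orderIsoOfSurjective θinv hinvmono hinvsurj) = θinv := rfl
    rw [← this]
    exact OrderIso.continuous _
  have hinvm : Measurable θinv := hinvc.measurable
  have hinvper : ∀ s, θinv (s + 2 * π) = θinv s + 2 * π := by
    intro s
    conv_lhs => rw [← hinv₂ s]
    rw [← hper (θinv s), hinv₁]
  have hinvd : ∀ s, HasDerivAt θinv (deriv θ (θinv s))⁻¹ s := fun s =>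
    HasDerivAt.of_local_left_inverse hinvc.continuousAt (hθd _).hasDerivAt
      (ne_of_gt (hdpos _)) (Filter.Eventually.of_forall hinv₂)
  -- notation
  set I : Set ℝ := Set.Ioc (-π) π with hIdef
  set Dk : ℝ → ENNReal := fun t => ENNReal.ofReal |dirichlet n t| with hDkdef
  set gp : ℝ → ℝ := fun u => ‖f u‖ ^ p with hgpdef
  set Ip : ℝ := ∫ u in (-π)..π, gp u with hIpdef
  have hgpnn : ∀ u, 0 ≤ gp u := fun u => Real.rpow_nonneg (norm_nonneg _) p
  have hIp0 : 0 ≤ Ip := intervalIntegral.integral_nonneg hle fun u _ => hgpnn u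
  have hgpm : Measurable gp := hfm.norm.pow measurable_const
  have hgpper : Function.Periodic gp (2 * π) := fun u => by
    simp only [hgpdef, hfper u]
  -- dirichlet measurability
  have hDm : Measurable (dirichlet n) := by
    unfold dirichlet
    exact (Real.continuous_sin.comp (continuous_const.mul continuous_id)).measurable.div
      (Real.continuous_sin.comp (continuous_id.div_const 2)).measurable
  have hDkm : Measurable Dk := ENNReal.measurable_ofReal.comp hDm.abs
  -- Lebesgue constant facts
  have hΛ0 : 0 ≤ lebesgueConst n :=
    mul_nonneg (by positivity)
      (intervalIntegral.integral_nonneg hle fun u _ => abs_nonneg _)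
  have hDint : IntegrableOn (fun t => |dirichlet n t|) I volume := by
    refine Integrable.mono' (g := fun _ => (2 * n + 1 : ℝ))
      (integrableOn_const measure_Ioc_lt_top.ne) hDm.abs.aestronglyMeasurable ?_
    exact ae_of_all _ fun t => by
      rw [Real.norm_eq_abs, abs_abs]
      exact PartialSumAux.abs_dirichlet_le n t
  have hΛe : ∫⁻ t in I, Dk t = ENNReal.ofReal (2 * π * lebesgueConst n) := by
    rw [← MeasureTheory.ofReal_integral_eq_lintegral_ofReal hDint
      (ae_of_all _ fun t => abs_nonneg _)]
    congr 1
    rw [hIdef, ← intervalIntegral.integral_of_le hle, lebesgueConst]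
    field_simp
  -- change of variables claim
  have hCoV : ∀ t : ℝ, (∫⁻ x in I, ENNReal.ofReal (gp (θinv (θ x + t))))
      ≤ ENNReal.ofReal (C * C) * ENNReal.ofReal Ip := by
    intro t
    set φ : ℝ → ℝ := fun x => θinv (θ x + t) with hφdef
    set φ' : ℝ → ℝ := fun x => (deriv θ (φ x))⁻¹ * deriv θ x with hφ'def
    have hφd : ∀ x, HasDerivAt φ (φ' x) x := fun x =>
      (hinvd (θ x + t)).comp x (((hθd x).hasDerivAt).add_const t)
    have hφ'pos : ∀ x, 0 < φ' x := fun x => mul_pos (inv_pos.2 (hdpos _)) (hdpos x)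
    have hφ'low : ∀ x, C⁻¹ * C⁻¹ ≤ φ' x := fun x =>
      mul_le_mul (inv_anti₀ (hdpos _) (hdhigh _)) (hdlow x)
        (inv_nonneg.2 hCpos.le) (inv_nonneg.2 (hdpos _).le)
    have hφmono : StrictMono φ := fun x y h => hinvmono (add_lt_add_left (hθm h) t)
    have hφsurj : Function.Surjective φ := fun y =>
      ⟨θinv (θ y - t), by simp only [hφdef]; rw [hinv₂, sub_add_cancel, hinv₁]⟩
    have hφim : φ '' I = Set.Ioc (φ (-π)) (φ π) := by
      have h0 : φ '' I = (StrictMono.orderIsoOfSurjective φ hφmono hφsurj) '' I := rfl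
      rw [h0, hIdef]
      exact OrderIso.image_Ioc _ _ _
    have e1 : θ π = θ (-π) + 2 * π := by rw [← hper (-π)]; congr 1; ring
    have hφπ : φ π = φ (-π) + 2 * π := by
      show θinv (θ π + t) = θinv (θ (-π) + t) + 2 * π
      rw [e1, show θ (-π) + 2*π + t = (θ (-π) + t) + 2*π by ring, hinvper]
    have himg := PartialSumAux.lintegral_image_eq_lintegral_abs_deriv_mul (f := φ) (f' := φ')
      (s := I) measurableSet_Ioc (fun x _ => (hφd x).hasDerivWithinAt) hφmono.injective.injOn
      (fun u => ENNReal.ofReal (gp u))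
    calc (∫⁻ x in I, ENNReal.ofReal (gp (θinv (θ x + t))))
        ≤ ∫⁻ x in I,
            ENNReal.ofReal (C * C) * (ENNReal.ofReal |φ' x| * ENNReal.ofReal (gp (φ x))) := by
          refine lintegral_mono fun x => ?_
          have h1 : (1:ENNReal) ≤ ENNReal.ofReal (C*C) * ENNReal.ofReal |φ' x| := by
            rw [← ENNReal.ofReal_mul (by positivity), ← ENNReal.ofReal_one]
            apply ENNReal.ofReal_le_ofReal
            rw [abs_of_pos (hφ'pos x)]
            calc (1:ℝ) = (C*C) * (C⁻¹ * C⁻¹) := by field_simp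
              _ ≤ (C*C) * φ' x := mul_le_mul_of_nonneg_left (hφ'low x) (by positivity)
          calc ENNReal.ofReal (gp (φ x)) = 1 * ENNReal.ofReal (gp (φ x)) := (one_mul _).symm
            _ ≤ (ENNReal.ofReal (C*C) * ENNReal.ofReal |φ' x|) * ENNReal.ofReal (gp (φ x)) :=
                mul_le_mul_left h1 _
            _ = ENNReal.ofReal (C*C) * (ENNReal.ofReal |φ' x| * ENNReal.ofReal (gp (φ x))) :=
                mul_assoc _ _ _
      _ = ENNReal.ofReal (C*C) * ∫⁻ x in I, ENNReal.ofReal |φ' x| * ENNReal.ofReal (gp (φ x)) :=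
          lintegral_const_mul' _ _ ENNReal.ofReal_ne_top
      _ = ENNReal.ofReal (C*C) * ∫⁻ u in φ '' I, ENNReal.ofReal (gp u) := by
          rw [hIdef] at himg ⊢; rw [himg]
      _ = ENNReal.ofReal (C*C) * ENNReal.ofReal Ip := by
          rw [hφim, hφπ, PartialSumAux.lintegral_periodic_Ioc hgpper hfp hgpnn (φ (-π)), hIpdef]
  -- notation for the partial sum
  set S : ℝ → ℂ := kernelPartialSum θ (f ∘ θinv) n with hSdef
  set N : ℝ → ℝ := fun x => ‖S x‖ with hNdef
  set G : ℝ → ℝ → ENNReal := fun x t => ENNReal.ofReal ‖f (θinv (θ x + t))‖ with hGdef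
  have hΦm : Measurable fun q : ℝ × ℝ => θinv (θ q.1 + q.2) :=
    hinvm.comp ((hθc.comp continuous_fst).add continuous_snd).measurable
  have hGm : Measurable (Function.uncurry G) :=
    ENNReal.measurable_ofReal.comp ((hfm.comp hΦm).norm)
  have hGxm : ∀ x, Measurable (G x) := fun x => by
    simp only [hGdef]
    exact ENNReal.measurable_ofReal.comp
      ((hfm.comp (hinvm.comp (measurable_const.add measurable_id))).norm)
  have hHm : Measurable fun q : ℝ × ℝ => f (θinv (θ q.1 + q.2)) * ((dirichlet n q.2 : ℝ) : ℂ) :=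
    (hfm.comp hΦm).mul (Complex.measurable_ofReal.comp (hDm.comp measurable_snd))
  have hSx : ∀ x, S x = (1 / (2 * π) : ℂ) *
      ∫ t in I, f (θinv (θ x + t)) * ((dirichlet n t : ℝ) : ℂ) := fun x => by
    rw [hSdef]
    unfold kernelPartialSum
    rw [intervalIntegral.integral_of_le hle]
    rfl
  have hNm : Measurable N := by
    have h1 : StronglyMeasurable fun x =>
        ∫ t in I, f (θinv (θ x + t)) * ((dirichlet n t : ℝ) : ℂ) :=
      (hHm.stronglyMeasurable).integral_prod_right'
    have h2 : N = fun x =>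
        ‖(1 / (2 * π) : ℂ) * ∫ t in I, f (θinv (θ x + t)) * ((dirichlet n t : ℝ) : ℂ)‖ :=
      funext fun x => by rw [hNdef]; simp only; rw [hSx x]
    rw [h2]
    exact (measurable_const.mul h1.measurable).norm
  have hN0 : ∀ x, 0 ≤ N x := fun x => norm_nonneg (S x)
  have hcnorm : ‖(1 / (2 * π) : ℂ)‖ = 1 / (2 * π) := by
    have h : (1 / (2 * π) : ℂ) = ((1 / (2 * π) : ℝ) : ℂ) := by push_cast; ring
    rw [h, Complex.norm_real, Real.norm_eq_abs, abs_of_pos (by positivity)]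
  set L : ℝ → ENNReal := fun x => ∫⁻ t in I, G x t * Dk t with hLdef
  have hA : ∀ x, ENNReal.ofReal (N x) ≤ ENNReal.ofReal (1 / (2 * π)) * L x := by
    intro x
    have h1 : N x = (1 / (2 * π)) *
        ‖∫ t in I, f (θinv (θ x + t)) * ((dirichlet n t : ℝ) : ℂ)‖ := by
      rw [hNdef]; simp only; rw [hSx x, norm_mul, hcnorm]
    have heq : (∫⁻ t in I, ENNReal.ofReal ‖f (θinv (θ x + t)) * ((dirichlet n t : ℝ) : ℂ)‖)
        = L x := by
      refine lintegral_congr fun t => ?_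
      rw [norm_mul, Complex.norm_real, Real.norm_eq_abs, ENNReal.ofReal_mul (norm_nonneg _)]
    have h2 : ‖∫ t in I, f (θinv (θ x + t)) * ((dirichlet n t : ℝ) : ℂ)‖ ≤ (L x).toReal := by
      refine le_trans (MeasureTheory.norm_integral_le_lintegral_norm _) ?_
      exact le_of_eq (congrArg ENNReal.toReal heq)
    calc ENNReal.ofReal (N x)
        = ENNReal.ofReal (1/(2*π)) *
          ENNReal.ofReal ‖∫ t in I, f (θinv (θ x + t)) * ((dirichlet n t : ℝ) : ℂ)‖ := by
          rw [h1, ENNReal.ofReal_mul (by positivity)]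
      _ ≤ ENNReal.ofReal (1/(2*π)) * ENNReal.ofReal ((L x).toReal) :=
          mul_le_mul_right (ENNReal.ofReal_le_ofReal h2) _
      _ ≤ ENNReal.ofReal (1/(2*π)) * L x := mul_le_mul_right ENNReal.ofReal_toReal_le _
  set Λe : ENNReal := ENNReal.ofReal (2 * π * lebesgueConst n) with hΛedef
  have hJen : ∀ x, (L x) ^ p ≤ Λe ^ (p - 1) * ∫⁻ t in I, (G x t) ^ p * Dk t := fun x => by
    have h := PartialSumAux.jensen_aux (volume.restrict I) hp (hGxm x) hDkm
    rw [hΛe] at h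
    exact h
  have humeas : Measurable (Function.uncurry fun x t => (G x t) ^ p * Dk t) :=
    ((hGm.pow measurable_const).mul (hDkm.comp measurable_snd))
  have hswap : (∫⁻ x in I, ∫⁻ t in I, (G x t) ^ p * Dk t)
      = ∫⁻ t in I, ∫⁻ x in I, (G x t) ^ p * Dk t :=
    lintegral_lintegral_swap humeas.aemeasurable
  have hGp : ∀ x t, (G x t) ^ p = ENNReal.ofReal (gp (θinv (θ x + t))) := fun x t => by
    simp only [hGdef, hgpdef]
    exact ENNReal.ofReal_rpow_of_nonneg (norm_nonneg (f (θinv (θ x + t)))) hp0.le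
  have hinner : ∀ t, (∫⁻ x in I, (G x t) ^ p * Dk t)
      ≤ (ENNReal.ofReal (C*C) * ENNReal.ofReal Ip) * Dk t := fun t => by
    rw [lintegral_mul_const' (Dk t) _ ENNReal.ofReal_ne_top]
    refine mul_le_mul_left ?_ _
    calc (∫⁻ x in I, (G x t) ^ p)
        = ∫⁻ x in I, ENNReal.ofReal (gp (θinv (θ x + t))) := lintegral_congr fun x => hGp x t
      _ ≤ _ := hCoV t
  have main : (∫⁻ x in I, ENNReal.ofReal (N x ^ p))
      ≤ ENNReal.ofReal (lebesgueConst n ^ p * (C * C * Ip)) := by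
    have hc1top : (ENNReal.ofReal (1/(2*π))) ^ p ≠ ⊤ :=
      ENNReal.rpow_ne_top_of_nonneg hp0.le ENNReal.ofReal_ne_top
    have hc2top : Λe ^ (p-1) ≠ ⊤ :=
      ENNReal.rpow_ne_top_of_nonneg (by linarith) ENNReal.ofReal_ne_top
    calc (∫⁻ x in I, ENNReal.ofReal (N x ^ p))
        ≤ ∫⁻ x in I, (ENNReal.ofReal (1/(2*π))) ^ p *
            (Λe ^ (p-1) * ∫⁻ t in I, (G x t) ^ p * Dk t) := by
          refine lintegral_mono fun x => ?_
          calc ENNReal.ofReal (N x ^ p)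
              = (ENNReal.ofReal (N x)) ^ p :=
                (ENNReal.ofReal_rpow_of_nonneg (hN0 x) hp0.le).symm
            _ ≤ (ENNReal.ofReal (1/(2*π)) * L x) ^ p := ENNReal.rpow_le_rpow (hA x) hp0.le
            _ = (ENNReal.ofReal (1/(2*π))) ^ p * (L x) ^ p :=
                ENNReal.mul_rpow_of_nonneg _ _ hp0.le
            _ ≤ _ := mul_le_mul_right (hJen x) _
      _ = (ENNReal.ofReal (1/(2*π))) ^ p *
            (Λe ^ (p-1) * ∫⁻ x in I, ∫⁻ t in I, (G x t) ^ p * Dk t) := by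
          rw [lintegral_const_mul' _ _ hc1top, lintegral_const_mul' _ _ hc2top]
      _ = (ENNReal.ofReal (1/(2*π))) ^ p *
            (Λe ^ (p-1) * ∫⁻ t in I, ∫⁻ x in I, (G x t) ^ p * Dk t) := by rw [hswap]
      _ ≤ (ENNReal.ofReal (1/(2*π))) ^ p *
            (Λe ^ (p-1) * ∫⁻ t in I, (ENNReal.ofReal (C*C) * ENNReal.ofReal Ip) * Dk t) :=
          mul_le_mul_right (mul_le_mul_right (lintegral_mono hinner) _) _
      _ = (ENNReal.ofReal (1/(2*π))) ^ p *
            (Λe ^ (p-1) * ((ENNReal.ofReal (C*C) * ENNReal.ofReal Ip) * Λe)) := by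
          rw [lintegral_const_mul' _ _
            (ENNReal.mul_ne_top ENNReal.ofReal_ne_top ENNReal.ofReal_ne_top), hΛe]
      _ = ENNReal.ofReal (lebesgueConst n ^ p * (C * C * Ip)) := by
          have hΛp : Λe ^ (p-1) * Λe = Λe ^ p := by
            nth_rewrite 2 [← ENNReal.rpow_one Λe]
            rw [← ENNReal.rpow_add_of_nonneg _ _ (by linarith) zero_le_one]
            norm_num
          have hcΛ : ENNReal.ofReal (1/(2*π)) ^ p * Λe ^ p
              = ENNReal.ofReal (lebesgueConst n ^ p) := by
            rw [← ENNReal.mul_rpow_of_nonneg _ _ hp0.le, hΛedef,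
              ← ENNReal.ofReal_mul (by positivity),
              show (1/(2*π)) * (2*π*lebesgueConst n) = lebesgueConst n by field_simp,
              ENNReal.ofReal_rpow_of_nonneg hΛ0 hp0.le]
          calc (ENNReal.ofReal (1/(2*π))) ^ p *
                (Λe ^ (p-1) * ((ENNReal.ofReal (C*C) * ENNReal.ofReal Ip) * Λe))
              = ((ENNReal.ofReal (1/(2*π))) ^ p * (Λe ^ (p-1) * Λe)) *
                (ENNReal.ofReal (C*C) * ENNReal.ofReal Ip) := by ring
            _ = ENNReal.ofReal (lebesgueConst n ^ p) *
                (ENNReal.ofReal (C*C) * ENNReal.ofReal Ip) := by rw [hΛp, hcΛ]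
            _ = ENNReal.ofReal (lebesgueConst n ^ p * (C * C * Ip)) := by
                rw [← ENNReal.ofReal_mul (by positivity),
                  ← ENNReal.ofReal_mul (Real.rpow_nonneg hΛ0 p)]
  have hNp_nonneg : ∀ x, 0 ≤ N x ^ p := fun x => Real.rpow_nonneg (hN0 x) p
  have hK0 : (0:ℝ) ≤ lebesgueConst n ^ p * (C * C * Ip) := by
    have := Real.rpow_nonneg hΛ0 p
    positivity
  have hJle : (∫ x in (-π)..π, N x ^ p) ≤ lebesgueConst n ^ p * (C * C * Ip) := by
    rw [intervalIntegral.integral_of_le hle,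
      MeasureTheory.integral_eq_lintegral_of_nonneg_ae (ae_of_all _ hNp_nonneg)
        ((hNm.pow measurable_const).aestronglyMeasurable)]
    exact ENNReal.toReal_le_of_le_ofReal hK0 main
  have hbase0 : (0:ℝ) ≤ (1/(2*π)) * ∫ x in (-π)..π, N x ^ p :=
    mul_nonneg (by positivity) (intervalIntegral.integral_nonneg hle fun x _ => hNp_nonneg x)
  have hpNS : pNorm p S = ((1/(2*π)) * ∫ x in (-π)..π, N x ^ p) ^ (1/p) := rfl
  have hpNf : pNorm p f = ((1/(2*π)) * Ip) ^ (1/p) := rfl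
  have hC2 : C ^ (2:ℝ) = C * C := by
    rw [show (2:ℝ) = ((2:ℕ):ℝ) by norm_num, Real.rpow_natCast]
    ring
  calc pNorm p S = ((1/(2*π)) * ∫ x in (-π)..π, N x ^ p) ^ (1/p) := hpNS
    _ ≤ ((1/(2*π)) * (lebesgueConst n ^ p * (C * C * Ip))) ^ (1/p) :=
        Real.rpow_le_rpow hbase0 (mul_le_mul_of_nonneg_left hJle (by positivity)) (by positivity)
    _ = (C ^ (2:ℝ) * (lebesgueConst n ^ p * ((1/(2*π)) * Ip))) ^ (1/p) := by
        rw [hC2]; congr 1; ring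
    _ = (C ^ (2:ℝ)) ^ (1/p) * ((lebesgueConst n ^ p) ^ (1/p) * ((1/(2*π)) * Ip) ^ (1/p)) := by
        rw [Real.mul_rpow (by rw [hC2]; positivity)
            (mul_nonneg (Real.rpow_nonneg hΛ0 p) (by positivity)),
          Real.mul_rpow (Real.rpow_nonneg hΛ0 p) (by positivity)]
    _ = C ^ (2/p) * (lebesgueConst n * pNorm p f) := by
        rw [← Real.rpow_mul hCpos.le, ← Real.rpow_mul hΛ0,
          show (2:ℝ) * (1/p) = 2/p by ring, mul_one_div_cancel hp0.ne', Real.rpow_one, hpNf]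
    _ = C ^ (2/p) * lebesgueConst n * pNorm p f := by ring
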